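/- Let X_1,…,X_s ≻ 0 and suppose there exists μ ∈ (0,1) with X_j − ∑_i π_{ij} A_j M X_i M* A_j* − ∑_i q_{ij} A_j N X_i N* A_j* ⪰ (1−μ) X_j for all j, where all coefficients π_{ij}, q_{ij} ≥ 0 and A_j, M, N are fixed matrices. Then for any H₀ = (H_{0,1},…,H_{0,s}) with H_{0,i} ⪰ 0, the iterates of the linear operator 𝓛_j(H) = ∑_i π_{ij} A_j M H_i M* A_j* + ∑_i q_{ij} A_j N H_i N* A_j* converge to zero. -/

import Mathlib

open Matrix Filter
open scoped Topology Matrix.Norms.L2Operator ComplexOrder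

/-- The linear operator 𝓛_j(H) = ∑ᵢ π_{ij} A_j M H_i M* A_j* + ∑ᵢ q_{ij} A_j N H_i N* A_j*
acting on s-tuples of matrices. -/
noncomputable def kfOp {n s : ℕ} (π q : Fin s → Fin s → ℝ)
    (A : Fin s → Matrix (Fin n) (Fin n) ℂ) (M N : Matrix (Fin n) (Fin n) ℂ)
    (H : Fin s → Matrix (Fin n) (Fin n) ℂ) : Fin s → Matrix (Fin n) (Fin n) ℂ :=
  fun j => ∑ i, (π i j : ℂ) • (A j * M * H i * Mᴴ * (A j)ᴴ)
    + ∑ i, (q i j : ℂ) • (A j * N * H i * Nᴴ * (A j)ᴴ)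

/-- A nonnegative real multiple of a PSD matrix is PSD. -/
lemma smulPSD {n : ℕ} {B : Matrix (Fin n) (Fin n) ℂ} (r : ℝ) (hr : 0 ≤ r) (hB : B.PosSemidef) :
    ((r : ℂ) • B).PosSemidef := by
  refine ⟨?_, fun x => ?_⟩
  · simp [Matrix.IsHermitian, conjTranspose_smul, hB.1.eq, Complex.conj_ofReal]
  · exact (hB.smul (Complex.zero_le_real.2 hr)).2 x

/-- A finite sum of PSD matrices is PSD. -/
lemma sumPSD {n s : ℕ} {f : Fin s → Matrix (Fin n) (Fin n) ℂ} (hf : ∀ i, (f i).PosSemidef) :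
    (∑ i, f i).PosSemidef := by
  classical
  exact Finset.sum_induction f _ (fun a b ha hb => ha.add hb) Matrix.PosSemidef.zero
    fun i _ => hf i

/-- The operator `kfOp` maps PSD tuples to PSD tuples. -/
lemma kfOp_psd {n s : ℕ} (π q : Fin s → Fin s → ℝ) (hπ : ∀ i j, 0 ≤ π i j)
    (hq : ∀ i j, 0 ≤ q i j) (A : Fin s → Matrix (Fin n) (Fin n) ℂ)
    (M N : Matrix (Fin n) (Fin n) ℂ) {H : Fin s → Matrix (Fin n) (Fin n) ℂ}
    (hH : ∀ i, (H i).PosSemidef) (j : Fin s) : (kfOp π q A M N H j).PosSemidef := by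
  refine PosSemidef.add (sumPSD fun i => ?_) (sumPSD fun i => ?_)
  · have e : A j * M * H i * Mᴴ * (A j)ᴴ = (A j * M) * H i * (A j * M)ᴴ := by
      rw [conjTranspose_mul]; simp [Matrix.mul_assoc]
    rw [e]; exact smulPSD _ (hπ i j) ((hH i).mul_mul_conjTranspose_same _)
  · have e : A j * N * H i * Nᴴ * (A j)ᴴ = (A j * N) * H i * (A j * N)ᴴ := by
      rw [conjTranspose_mul]; simp [Matrix.mul_assoc]
    rw [e]; exact smulPSD _ (hq i j) ((hH i).mul_mul_conjTranspose_same _)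

lemma kfOp_sub {n s : ℕ} (π q : Fin s → Fin s → ℝ) (A : Fin s → Matrix (Fin n) (Fin n) ℂ)
    (M N : Matrix (Fin n) (Fin n) ℂ) (P Q : Fin s → Matrix (Fin n) (Fin n) ℂ) (j : Fin s) :
    kfOp π q A M N (fun i => P i - Q i) j = kfOp π q A M N P j - kfOp π q A M N Q j := by
  simp only [kfOp, Matrix.mul_sub, Matrix.sub_mul, smul_sub, Finset.sum_sub_distrib]
  abel

lemma kfOp_smul {n s : ℕ} (π q : Fin s → Fin s → ℝ) (A : Fin s → Matrix (Fin n) (Fin n) ℂ)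
    (M N : Matrix (Fin n) (Fin n) ℂ) (a : ℂ) (H : Fin s → Matrix (Fin n) (Fin n) ℂ) (j : Fin s) :
    kfOp π q A M N (fun i => a • H i) j = a • kfOp π q A M N H j := by
  simp only [kfOp, Matrix.mul_smul, Matrix.smul_mul, smul_smul, smul_add, Finset.smul_sum,
    mul_comm]

/-- If all eigenvalues of a Hermitian matrix are at most `r`, then `r • 1 - A` is PSD. -/
lemma sandwich_upper {n : ℕ} {A : Matrix (Fin n) (Fin n) ℂ} (hA : A.IsHermitian) (r : ℝ)
    (h : ∀ i, hA.eigenvalues i ≤ r) : ((r : ℂ) • (1 : Matrix (Fin n) (Fin n) ℂ) - A).PosSemidef := by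
  set U : Matrix (Fin n) (Fin n) ℂ := (hA.eigenvectorUnitary : Matrix (Fin n) (Fin n) ℂ) with hUdef
  have hU1 : U * Uᴴ = 1 := by
    simpa [star_eq_conjTranspose] using (Matrix.mem_unitaryGroup_iff).mp hA.eigenvectorUnitary.2
  have hd : diagonal (fun i => ((r - hA.eigenvalues i : ℝ) : ℂ))
      = (r : ℂ) • 1 - diagonal (RCLike.ofReal ∘ hA.eigenvalues) := by
    rw [smul_one_eq_diagonal]
    ext i j
    rcases eq_or_ne i j with rfl | hij
    · simp
    · simp [diagonal_apply_ne _ hij]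
  have key : (r : ℂ) • (1 : Matrix (Fin n) (Fin n) ℂ) - A
      = U * diagonal (fun i => ((r - hA.eigenvalues i : ℝ) : ℂ)) * Uᴴ := by
    rw [hd, Matrix.mul_sub, Matrix.sub_mul, Matrix.mul_smul, Matrix.mul_one, Matrix.smul_mul, hU1,
      ← star_eq_conjTranspose U, hUdef, ← Unitary.conjStarAlgAut_apply (S := ℂ), ← hA.spectral_theorem]
  rw [key]
  exact (PosSemidef.diagonal fun i => Complex.zero_le_real.2
    (sub_nonneg.2 (h i))).mul_mul_conjTranspose_same U

/-- If all eigenvalues of a Hermitian matrix are at least `r`, then `A - r • 1` is PSD. -/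
lemma sandwich_lower {n : ℕ} {A : Matrix (Fin n) (Fin n) ℂ} (hA : A.IsHermitian) (r : ℝ)
    (h : ∀ i, r ≤ hA.eigenvalues i) : (A - (r : ℂ) • (1 : Matrix (Fin n) (Fin n) ℂ)).PosSemidef := by
  set U : Matrix (Fin n) (Fin n) ℂ := (hA.eigenvectorUnitary : Matrix (Fin n) (Fin n) ℂ) with hUdef
  have hU1 : U * Uᴴ = 1 := by
    simpa [star_eq_conjTranspose] using (Matrix.mem_unitaryGroup_iff).mp hA.eigenvectorUnitary.2
  have hd : diagonal (fun i => ((hA.eigenvalues i - r : ℝ) : ℂ))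
      = diagonal (RCLike.ofReal ∘ hA.eigenvalues) - (r : ℂ) • 1 := by
    rw [smul_one_eq_diagonal]
    ext i j
    rcases eq_or_ne i j with rfl | hij
    · simp
    · simp [diagonal_apply_ne _ hij]
  have key : A - (r : ℂ) • (1 : Matrix (Fin n) (Fin n) ℂ)
      = U * diagonal (fun i => ((hA.eigenvalues i - r : ℝ) : ℂ)) * Uᴴ := by
    rw [hd, Matrix.mul_sub, Matrix.sub_mul, Matrix.mul_smul, Matrix.mul_one, Matrix.smul_mul, hU1,
      ← star_eq_conjTranspose U, hUdef, ← Unitary.conjStarAlgAut_apply (S := ℂ), ← hA.spectral_theorem]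
  rw [key]
  exact (PosSemidef.diagonal fun i => Complex.zero_le_real.2
    (sub_nonneg.2 (h i))).mul_mul_conjTranspose_same U

/-- Any PSD matrix is dominated by a nonnegative multiple of a positive definite matrix. -/
lemma dominate {n : ℕ} [Nonempty (Fin n)] {X H : Matrix (Fin n) (Fin n) ℂ}
    (hX : X.PosDef) (hH : H.PosSemidef) :
    ∃ c : ℝ, 0 ≤ c ∧ ((c : ℂ) • X - H).PosSemidef := by
  set m : ℝ := Finset.univ.inf' Finset.univ_nonempty hX.1.eigenvalues with hm
  have hm0 : 0 < m := by
    rw [hm, Finset.lt_inf'_iff]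
    exact fun i _ => hX.eigenvalues_pos i
  set t : ℝ := ∑ i, hH.1.eigenvalues i with ht
  have ht0 : 0 ≤ t := Finset.sum_nonneg fun i _ => hH.eigenvalues_nonneg i
  refine ⟨t / m, div_nonneg ht0 hm0.le, ?_⟩
  have h1 : (X - (m : ℂ) • 1).PosSemidef :=
    sandwich_lower hX.1 m fun i => Finset.inf'_le _ (Finset.mem_univ i)
  have h2 : ((t : ℂ) • 1 - H).PosSemidef :=
    sandwich_upper hH.1 t fun i =>
      Finset.single_le_sum (fun i _ => hH.eigenvalues_nonneg i) (Finset.mem_univ i)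
  have hcm : ((t / m : ℝ) : ℂ) * (m : ℂ) = (t : ℂ) := by
    push_cast
    field_simp
  have key : ((t / m : ℝ) : ℂ) • X - H
      = ((t / m : ℝ) : ℂ) • (X - (m : ℂ) • 1) + ((t : ℂ) • 1 - H) := by
    rw [smul_sub, smul_smul, hcm]
    abel
  rw [key]
  exact (smulPSD _ (div_nonneg ht0 hm0.le) h1).add h2

/-- The L2 operator norm is monotone with respect to the Loewner order on PSD matrices. -/
lemma norm_le_of_psd_le {n : ℕ} {G C : Matrix (Fin n) (Fin n) ℂ} (hG : G.PosSemidef)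
    (hGC : (C - G).PosSemidef) : ‖G‖ ≤ ‖C‖ := by
  have hC0 : (0 : ℝ) ≤ ‖C‖ := norm_nonneg _
  obtain ⟨S, hS, hSS⟩ : ∃ S : Matrix (Fin n) (Fin n) ℂ, S.PosSemidef ∧ S * S = G :=
    by open scoped MatrixOrder in
      exact ⟨CFC.sqrt G, (CFC.sqrt_nonneg G).posSemidef, CFC.sqrt_mul_sqrt_self G hG.nonneg⟩
  -- key pointwise bound
  have hnorm : ∀ x : EuclideanSpace ℂ (Fin n),
      ‖Matrix.toEuclideanCLM (𝕜 := ℂ) S x‖ ≤ Real.sqrt ‖C‖ * ‖x‖ := by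
    intro x
    set xv : Fin n → ℂ := WithLp.equiv 2 (Fin n → ℂ) x with hxv
    have happ : Matrix.toEuclideanCLM (𝕜 := ℂ) S x = (WithLp.equiv 2 (Fin n → ℂ)).symm (S *ᵥ xv) := by
      apply (WithLp.equiv 2 (Fin n → ℂ)).injective
      simp [hxv]
    have hsq : ‖Matrix.toEuclideanCLM (𝕜 := ℂ) S x‖ ^ 2
        = RCLike.re (dotProduct (star xv) (G *ᵥ xv)) := by
      rw [happ, ← inner_self_eq_norm_sq (𝕜 := ℂ), WithLp.equiv_symm_apply, EuclideanSpace.inner_toLp_toLp]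
      congr 1
      rw [star_mulVec, dotProduct_comm, ← Matrix.dotProduct_mulVec, mulVec_mulVec, hS.isHermitian.eq, hSS]
    have hle : RCLike.re (dotProduct (star xv) (G *ᵥ xv)) ≤ ‖C‖ * ‖x‖ ^ 2 := by
      have h1 : RCLike.re (dotProduct (star xv) (G *ᵥ xv))
          ≤ RCLike.re (dotProduct (star xv) (C *ᵥ xv)) := by
        have := hGC.re_dotProduct_nonneg xv
        rw [Matrix.sub_mulVec, dotProduct_sub, map_sub] at this
        linarith
      refine h1.trans ?_
      have h2 : dotProduct (star xv) (C *ᵥ xv)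
          = inner (𝕜 := ℂ) x ((WithLp.equiv 2 (Fin n → ℂ)).symm (C *ᵥ xv)) := by
        rw [EuclideanSpace.inner_eq_star_dotProduct, dotProduct_comm]
        rfl
      rw [h2]
      calc RCLike.re (inner (𝕜 := ℂ) x ((WithLp.equiv 2 (Fin n → ℂ)).symm (C *ᵥ xv)))
          ≤ ‖inner (𝕜 := ℂ) x ((WithLp.equiv 2 (Fin n → ℂ)).symm (C *ᵥ xv))‖ :=
            RCLike.re_le_norm _
        _ ≤ ‖x‖ * ‖(WithLp.equiv 2 (Fin n → ℂ)).symm (C *ᵥ xv)‖ := norm_inner_le_norm _ _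
        _ ≤ ‖x‖ * (‖C‖ * ‖x‖) := by
            refine mul_le_mul_of_nonneg_left ?_ (norm_nonneg _)
            exact C.l2_opNorm_mulVec x
        _ = ‖C‖ * ‖x‖ ^ 2 := by ring
    have h3 : ‖Matrix.toEuclideanCLM (𝕜 := ℂ) S x‖ ^ 2 ≤ (Real.sqrt ‖C‖ * ‖x‖) ^ 2 := by
      rw [hsq]
      calc RCLike.re (dotProduct (star xv) (G *ᵥ xv)) ≤ ‖C‖ * ‖x‖ ^ 2 := hle
        _ = (Real.sqrt ‖C‖ * ‖x‖) ^ 2 := by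
            rw [mul_pow, Real.sq_sqrt hC0]
    calc ‖Matrix.toEuclideanCLM (𝕜 := ℂ) S x‖
        = Real.sqrt (‖Matrix.toEuclideanCLM (𝕜 := ℂ) S x‖ ^ 2) :=
          (Real.sqrt_sq (norm_nonneg _)).symm
      _ ≤ Real.sqrt ((Real.sqrt ‖C‖ * ‖x‖) ^ 2) := Real.sqrt_le_sqrt h3
      _ = Real.sqrt ‖C‖ * ‖x‖ := Real.sqrt_sq (by positivity)
  have hSnorm : ‖S‖ ≤ Real.sqrt ‖C‖ := by
    rw [Matrix.cstar_norm_def]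
    exact ContinuousLinearMap.opNorm_le_bound _ (Real.sqrt_nonneg _) hnorm
  have hG' : Sᴴ * S = G := by rw [hS.isHermitian.eq, hSS]
  have : ‖G‖ = ‖S‖ * ‖S‖ := by rw [← hG']; exact S.l2_opNorm_conjTranspose_mul_self
  rw [this]
  calc ‖S‖ * ‖S‖ ≤ Real.sqrt ‖C‖ * Real.sqrt ‖C‖ :=
        mul_le_mul hSnorm hSnorm (norm_nonneg _) (Real.sqrt_nonneg _)
    _ = ‖C‖ := Real.mul_self_sqrt hC0

/-- If there exist X_j ≻ 0 and μ ∈ (0,1) with X_j − 𝓛_j(X) ⪰ (1−μ)X_j for all j,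
then the iterates of 𝓛 applied to any PSD tuple H₀ converge to zero. -/
theorem kfOp_iterates_tendsto_zero {n s : ℕ}
    (π q : Fin s → Fin s → ℝ) (hπ : ∀ i j, 0 ≤ π i j) (hq : ∀ i j, 0 ≤ q i j)
    (A : Fin s → Matrix (Fin n) (Fin n) ℂ) (M N : Matrix (Fin n) (Fin n) ℂ)
    (X : Fin s → Matrix (Fin n) (Fin n) ℂ) (hX : ∀ j, (X j).PosDef)
    (μ : ℝ) (hμ0 : 0 < μ) (hμ1 : μ < 1)
    (hcontr : ∀ j, ((X j - kfOp π q A M N X j) - ((1 - μ : ℝ) : ℂ) • X j).PosSemidef)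
    (H₀ : Fin s → Matrix (Fin n) (Fin n) ℂ) (hH₀ : ∀ i, (H₀ i).PosSemidef) :
    Tendsto (fun k : ℕ => (kfOp π q A M N)^[k] H₀) atTop (𝓝 0) := by
  rcases Nat.eq_zero_or_pos n with rfl | hn
  · have hz : (fun k : ℕ => (kfOp π q A M N)^[k] H₀) = fun _ => 0 := by
      funext k j
      ext a b
      exact a.elim0
    rw [hz]
    exact tendsto_const_nhds
  haveI : Nonempty (Fin n) := Fin.pos_iff_nonempty.mp hn
  -- μ-contraction on X
  have hLX : ∀ j, ((μ : ℂ) • X j - kfOp π q A M N X j).PosSemidef := by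
    intro j
    have h := hcontr j
    have e : (X j - kfOp π q A M N X j) - ((1 - μ : ℝ) : ℂ) • X j
        = (μ : ℂ) • X j - kfOp π q A M N X j := by
      push_cast
      module
    rwa [e] at h
  -- domination of H₀ by a multiple of X
  choose c0 hc00 hc0 using fun i => dominate (hX i) (hH₀ i)
  set c : ℝ := ∑ i, c0 i with hc
  have hcnn : 0 ≤ c := Finset.sum_nonneg fun i _ => hc00 i
  have hdom : ∀ i, ((c : ℂ) • X i - H₀ i).PosSemidef := by
    intro i
    have e : (c : ℂ) • X i - H₀ i
        = ((c0 i : ℂ) • X i - H₀ i) + ((c - c0 i : ℝ) : ℂ) • X i := by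
      push_cast
      module
    rw [e]
    exact (hc0 i).add (smulPSD _
      (sub_nonneg.2 (Finset.single_le_sum (fun i _ => hc00 i) (Finset.mem_univ i)))
      (hX i).posSemidef)
  -- the key induction
  have key : ∀ k : ℕ, (∀ j, ((kfOp π q A M N)^[k] H₀ j).PosSemidef)
      ∧ ∀ j, (((c * μ ^ k : ℝ) : ℂ) • X j - (kfOp π q A M N)^[k] H₀ j).PosSemidef := by
    intro k
    induction k with
    | zero =>
      refine ⟨by simpa using hH₀, fun j => ?_⟩
      simpa using hdom j
    | succ k ih =>
      obtain ⟨ih1, ih2⟩ := ih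
      constructor
      · intro j
        rw [Function.iterate_succ_apply']
        exact kfOp_psd π q hπ hq A M N ih1 j
      · intro j
        rw [Function.iterate_succ_apply']
      -- abbreviations
        have hann : (0 : ℝ) ≤ c * μ ^ k := mul_nonneg hcnn (pow_nonneg hμ0.le k)
        have e2 : ((c * μ ^ k : ℝ) : ℂ) • kfOp π q A M N X j
              - kfOp π q A M N ((kfOp π q A M N)^[k] H₀) j
            = kfOp π q A M N
                (fun i => ((c * μ ^ k : ℝ) : ℂ) • X i - (kfOp π q A M N)^[k] H₀ i) j := by
          rw [show (fun i => ((c * μ ^ k : ℝ) : ℂ) • X i - (kfOp π q A M N)^[k] H₀ i)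
              = (fun i => (fun i' => ((c * μ ^ k : ℝ) : ℂ) • X i') i - (kfOp π q A M N)^[k] H₀ i)
              from rfl, kfOp_sub, kfOp_smul]
        have e : ((c * μ ^ (k + 1) : ℝ) : ℂ) • X j
              - kfOp π q A M N ((kfOp π q A M N)^[k] H₀) j
            = ((c * μ ^ k : ℝ) : ℂ) • ((μ : ℂ) • X j - kfOp π q A M N X j)
              + (((c * μ ^ k : ℝ) : ℂ) • kfOp π q A M N X j
                - kfOp π q A M N ((kfOp π q A M N)^[k] H₀) j) := by
          push_cast [pow_succ]
          module
        rw [e, e2]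
        exact (smulPSD _ hann (hLX j)).add
          (kfOp_psd π q hπ hq A M N (fun i => ih2 i) j)
  -- conclusion by squeezing the operator norms
  rw [tendsto_pi_nhds]
  intro j
  simp only [Pi.zero_apply]
  apply squeeze_zero_norm (a := fun k => c * ‖X j‖ * μ ^ k)
  · intro k
    have h1 := (key k).1 j
    have h2 := (key k).2 j
    have h3 := norm_le_of_psd_le h1 h2
    calc ‖(kfOp π q A M N)^[k] H₀ j‖ ≤ ‖((c * μ ^ k : ℝ) : ℂ) • X j‖ := h3
      _ = c * ‖X j‖ * μ ^ k := by
          rw [norm_smul]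
          simp [abs_of_nonneg (mul_nonneg hcnn (pow_nonneg hμ0.le k)),
            abs_of_nonneg hμ0.le, abs_of_nonneg hcnn]
          ring
  · have h := tendsto_pow_atTop_nhds_zero_of_lt_one hμ0.le hμ1
    have := h.const_mul (c * ‖X j‖)
    simpa using this
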